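/- Closed-form metric function for r(ρ) = ρ − c²/ρ: the function A(ρ) = 1 − 3mρ/(8c²) − 11m/(8ρ) − (c²/(3ρ²))·(c² − 3mρ)/(c² − ρ²) + 3m(c² − ρ²)² ln((ρ+c)/(ρ−c))/(16 c³ ρ²) satisfies the once-integrated field equation r² A' − (r²)' A = 6m − 2ρ on (c,∞), and A(ρ) → 1 as ρ → ∞. -/

import Mathlib

set_option maxHeartbeats 1000000


open Filter

/-- Third order Taylor bound for `log ((1+t)/(1-t))`. -/
lemma log_ratio_bound (t : ℝ) (ht : 0 ≤ t) (ht1 : t < 1) :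
    |Real.log (1 + t) - Real.log (1 - t) - 2 * t| ≤ 2 * t ^ 3 / (1 - t) := by
  have habs : |t| < 1 := by rwa [abs_of_nonneg ht]
  have habs' : |(-t)| < 1 := by rwa [abs_neg]
  have h1 := Real.abs_log_sub_add_sum_range_le habs 2
  have h2 := Real.abs_log_sub_add_sum_range_le habs' 2
  rw [abs_of_nonneg ht] at h1
  rw [abs_neg, abs_of_nonneg ht] at h2
  simp only [Finset.sum_range_succ, Finset.sum_range_zero] at h1 h2
  norm_num at h1 h2
  have h3 : Real.log (1 + t) - Real.log (1 - t) - 2 * t =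
      (t ^ 2 / 2 - t + Real.log (1 + t)) - (t + t ^ 2 / 2 + Real.log (1 - t)) := by
    ring_nf
  rw [h3]
  calc |(t ^ 2 / 2 - t + Real.log (1 + t)) - (t + t ^ 2 / 2 + Real.log (1 - t))|
      ≤ |t ^ 2 / 2 - t + Real.log (1 + t)| + |t + t ^ 2 / 2 + Real.log (1 - t)| :=
        abs_sub _ _
    _ ≤ t ^ 3 / (1 - t) + t ^ 3 / (1 - t) := by
        apply add_le_add
        · have : t ^ 2 / 2 - t + Real.log (1 + t) = -t + t ^ 2 / 2 + Real.log (1 - -t) := by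
            ring_nf
          rw [this]
          rw [show (1:ℝ) - -t = 1 + t by ring]; exact h2
        · convert h1 using 2 <;> ring
    _ = 2 * t ^ 3 / (1 - t) := by ring

/-- Closed-form metric function for `r(ρ) = ρ − c²/ρ`: the explicit
`A(ρ) = 1 − 3mρ/(8c²) − 11m/(8ρ) − (c²/(3ρ²))(c²−3mρ)/(c²−ρ²)
      + 3m(c²−ρ²)² ln((ρ+c)/(ρ−c))/(16c³ρ²)`
satisfies `r² A' − (r²)' A = 6m − 2ρ` on `(c,∞)` and `A → 1` at infinity. -/
theorem stmt18 (c m : ℝ) (hc : 0 < c)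
    (r A : ℝ → ℝ)
    (hr : ∀ ρ : ℝ, r ρ = ρ - c ^ 2 / ρ)
    (hA : ∀ ρ : ℝ, A ρ =
      1 - 3 * m * ρ / (8 * c ^ 2) - 11 * m / (8 * ρ)
        - (c ^ 2 / (3 * ρ ^ 2)) * ((c ^ 2 - 3 * m * ρ) / (c ^ 2 - ρ ^ 2))
        + 3 * m * (c ^ 2 - ρ ^ 2) ^ 2 * Real.log ((ρ + c) / (ρ - c))
            / (16 * c ^ 3 * ρ ^ 2)) :
    (∀ ρ ∈ Set.Ioi c, DifferentiableAt ℝ A ρ ∧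
      r ρ ^ 2 * deriv A ρ - (2 * ρ - 2 * c ^ 4 / ρ ^ 3) * A ρ = 6 * m - 2 * ρ) ∧
    Tendsto A atTop (nhds 1) := by
  have hc0 : c ≠ 0 := hc.ne'
  constructor
  · intro ρ hρ
    have hcρ : c < ρ := hρ
    have hρpos : 0 < ρ := hc.trans hcρ
    have hρ0 : ρ ≠ 0 := hρpos.ne'
    have hpc : ρ + c ≠ 0 := by positivity
    have hmc : ρ - c ≠ 0 := sub_ne_zero.mpr hcρ.ne'
    have hsq : c ^ 2 - ρ ^ 2 ≠ 0 := by
      have : c ^ 2 < ρ ^ 2 := by nlinarith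
      exact sub_ne_zero.mpr this.ne
    have d0 : HasDerivAt (fun x : ℝ => x) 1 ρ := hasDerivAt_id' ρ
    have d1 := (d0.const_mul (3 * m)).div_const (8 * c ^ 2)
    have d2 := (hasDerivAt_const ρ (11 * m)).div (d0.const_mul 8)
      (by simpa using mul_ne_zero (by norm_num : (8:ℝ) ≠ 0) hρ0)
    have d3a := (hasDerivAt_const ρ (c ^ 2)).div ((d0.pow 2).const_mul 3)
      (by simpa using mul_ne_zero (by norm_num : (3:ℝ) ≠ 0) (pow_ne_zero 2 hρ0))
    have d3b := ((hasDerivAt_const ρ (c ^ 2)).sub (d0.const_mul (3 * m))).div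
      ((hasDerivAt_const ρ (c ^ 2)).sub (d0.pow 2)) (by simpa using hsq)
    have d3 := d3a.mul d3b
    have l1 : HasDerivAt (fun x : ℝ => Real.log (x + c)) (1 / (ρ + c)) ρ :=
      (d0.add_const c).log hpc
    have l2 : HasDerivAt (fun x : ℝ => Real.log (x - c)) (1 / (ρ - c)) ρ :=
      (d0.sub_const c).log hmc
    have d4num := ((((hasDerivAt_const ρ (c ^ 2)).sub (d0.pow 2)).pow 2).const_mul
      (3 * m)).mul (l1.sub l2)
    have d4 := d4num.div ((d0.pow 2).const_mul (16 * c ^ 3))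
      (by
        have : (16:ℝ) * c ^ 3 * ρ ^ 2 ≠ 0 := by positivity
        simpa using this)
    have hE := ((((hasDerivAt_const ρ (1:ℝ)).sub d1).sub d2).sub d3).add d4
    have hEq : A =ᶠ[nhds ρ] (fun x : ℝ =>
        1 - 3 * m * x / (8 * c ^ 2) - 11 * m / (8 * x)
          - (c ^ 2 / (3 * x ^ 2)) * ((c ^ 2 - 3 * m * x) / (c ^ 2 - x ^ 2))
          + 3 * m * (c ^ 2 - x ^ 2) ^ 2 * (Real.log (x + c) - Real.log (x - c))
              / (16 * c ^ 3 * x ^ 2)) := by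
      filter_upwards [isOpen_Ioi.mem_nhds hρ] with x hx
      have hx' : c < x := hx
      have hxpc : x + c ≠ 0 := by nlinarith
      have hxmc : x - c ≠ 0 := sub_ne_zero.mpr hx'.ne'
      rw [hA x, Real.log_div hxpc hxmc]
    have hA' := hE.congr_of_eventuallyEq hEq
    refine ⟨hA'.differentiableAt, ?_⟩
    rw [hA'.deriv, hr, hA ρ, Real.log_div hpc hmc]
    simp only [Pi.pow_apply, Pi.sub_apply, Pi.div_apply, Pi.mul_apply]
    field_simp
    ring
  · -- the limit at infinity
    have hL : Tendsto (fun ρ : ℝ => Real.log ((ρ + c) / (ρ - c))) atTop (nhds 0) := by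
      have hsub : Tendsto (fun ρ : ℝ => ρ - c) atTop atTop :=
        tendsto_atTop_add_const_right atTop (-c) tendsto_id |>.congr
          (fun x => by simp only [id_eq]; ring)
      have hratio : Tendsto (fun ρ : ℝ => (ρ + c) / (ρ - c)) atTop (nhds 1) := by
        have h2 : Tendsto (fun ρ : ℝ => 1 + 2 * c / (ρ - c)) atTop (nhds 1) := by
          have := (tendsto_const_nhds (x := (2*c : ℝ)) (f := atTop)).div_atTop hsub
          simpa using tendsto_const_nhds.add this
        refine h2.congr' ?_
        filter_upwards [eventually_gt_atTop c] with ρ hρ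
        have hmc : ρ - c ≠ 0 := sub_ne_zero.mpr hρ.ne'
        field_simp
        ring
      have hcont := (Real.continuousAt_log (one_ne_zero)).tendsto.comp hratio
      simpa [Real.log_one, Function.comp_def] using hcont
    have hdiv : ∀ (a : ℝ) (n : ℕ), n ≠ 0 →
        Tendsto (fun ρ : ℝ => a / ρ ^ n) atTop (nhds 0) :=
      fun a n hn => tendsto_const_nhds.div_atTop (tendsto_pow_atTop hn)
    -- the delicate term : ρ * (ρ * L ρ - 2c) → 0
    have hphi : Tendsto (fun ρ : ℝ =>
        ρ * (ρ * Real.log ((ρ + c) / (ρ - c)) - 2 * c)) atTop (nhds 0) := by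
      have hbound : Tendsto (fun ρ : ℝ => 2 * c ^ 3 / (ρ - c)) atTop (nhds 0) := by
        exact tendsto_const_nhds.div_atTop
          (tendsto_atTop_add_const_right atTop (-c) tendsto_id |>.congr
            (fun x => by simp only [id_eq]; ring))
      apply squeeze_zero_norm' _ hbound
      filter_upwards [eventually_gt_atTop c] with ρ hρ
      have hρpos : 0 < ρ := hc.trans hρ
      have hρ0 : ρ ≠ 0 := hρpos.ne'
      have hmc : 0 < ρ - c := sub_pos.mpr hρ
      set t := c / ρ with ht
      have ht0 : 0 ≤ t := by positivity
      have ht1 : t < 1 := (div_lt_one hρpos).mpr hρ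
      have hlogeq : Real.log ((ρ + c) / (ρ - c)) =
          Real.log (1 + t) - Real.log (1 - t) := by
        have h1t : 1 + t ≠ 0 := by positivity
        have h2t : 1 - t ≠ 0 := (sub_pos.mpr ht1).ne'
        rw [← Real.log_div h1t h2t]
        congr 1
        rw [ht]
        field_simp
        try ring
      have key := log_ratio_bound t ht0 ht1
      have heq1 : ρ * (ρ * Real.log ((ρ + c) / (ρ - c)) - 2 * c) =
          ρ ^ 2 * (Real.log (1 + t) - Real.log (1 - t) - 2 * t) := by
        rw [hlogeq, ht]
        field_simp
      rw [Real.norm_eq_abs, heq1, abs_mul, abs_of_nonneg (by positivity : (0:ℝ) ≤ ρ ^ 2)]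
      have hb2 : ρ ^ 2 * |Real.log (1 + t) - Real.log (1 - t) - 2 * t| ≤
          ρ ^ 2 * (2 * t ^ 3 / (1 - t)) :=
        mul_le_mul_of_nonneg_left key (by positivity)
      refine hb2.trans (le_of_eq ?_)
      rw [ht]
      have h2t : (1:ℝ) - c / ρ ≠ 0 := by
        have : c / ρ < 1 := (div_lt_one hρpos).mpr hρ
        exact (sub_pos.mpr this).ne'
      have hmc' : ρ - c ≠ 0 := hmc.ne'
      field_simp
    -- the rational tail term
    have hrat : Tendsto (fun ρ : ℝ =>
        (c ^ 4 / ρ ^ 4 - 3 * m * c ^ 2 / ρ ^ 3) / (3 * (1 - c ^ 2 / ρ ^ 2)))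
        atTop (nhds 0) := by
      have hnum : Tendsto (fun ρ : ℝ => c ^ 4 / ρ ^ 4 - 3 * m * c ^ 2 / ρ ^ 3)
          atTop (nhds 0) := by
        simpa using (hdiv (c ^ 4) 4 (by norm_num)).sub (hdiv (3 * m * c ^ 2) 3 (by norm_num))
      have hden : Tendsto (fun ρ : ℝ => 3 * (1 - c ^ 2 / ρ ^ 2)) atTop (nhds 3) := by
        have := (tendsto_const_nhds (x := (1:ℝ)) (f := atTop)).sub (hdiv (c ^ 2) 2 (by norm_num))
        simpa using this.const_mul 3
      simpa [Pi.div_def] using hnum.div hden (by norm_num)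
    have hmain : Tendsto (fun ρ : ℝ =>
        1 + ((3 * m / (16 * c ^ 3)) *
              (ρ * (ρ * Real.log ((ρ + c) / (ρ - c)) - 2 * c)
                - 2 * c ^ 2 * Real.log ((ρ + c) / (ρ - c))
                + c ^ 4 / ρ ^ 2 * Real.log ((ρ + c) / (ρ - c)))
            + (-(11 * m)) / (8 * ρ)
            + (c ^ 4 / ρ ^ 4 - 3 * m * c ^ 2 / ρ ^ 3) / (3 * (1 - c ^ 2 / ρ ^ 2))))
        atTop (nhds 1) := by
      have hg : Tendsto (fun ρ : ℝ =>
          ρ * (ρ * Real.log ((ρ + c) / (ρ - c)) - 2 * c)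
            - 2 * c ^ 2 * Real.log ((ρ + c) / (ρ - c))
            + c ^ 4 / ρ ^ 2 * Real.log ((ρ + c) / (ρ - c))) atTop (nhds 0) := by
        have h2 : Tendsto (fun ρ : ℝ => 2 * c ^ 2 * Real.log ((ρ + c) / (ρ - c)))
            atTop (nhds 0) := by simpa using hL.const_mul (2 * c ^ 2)
        have h3 : Tendsto (fun ρ : ℝ => c ^ 4 / ρ ^ 2 * Real.log ((ρ + c) / (ρ - c)))
            atTop (nhds 0) := by simpa using (hdiv (c ^ 4) 2 (by norm_num)).mul hL
        simpa using (hphi.sub h2).add h3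
      have h11 : Tendsto (fun ρ : ℝ => (-(11 * m)) / (8 * ρ)) atTop (nhds 0) := by
        apply tendsto_const_nhds.div_atTop
        exact (tendsto_id.const_mul_atTop (by norm_num : (0:ℝ) < 8)).congr (fun x => by simp only [id_eq])
      have := ((hg.const_mul (3 * m / (16 * c ^ 3))).add h11).add hrat
      simpa using tendsto_const_nhds.add this
    refine Tendsto.congr' ?_ hmain
    filter_upwards [eventually_gt_atTop c] with ρ hρ
    have hρpos : 0 < ρ := hc.trans hρ
    have hρ0 : ρ ≠ 0 := hρpos.ne'
    have hsq : c ^ 2 - ρ ^ 2 ≠ 0 := by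
      have : c ^ 2 < ρ ^ 2 := by nlinarith
      exact sub_ne_zero.mpr this.ne
    have h1m : (1:ℝ) - c ^ 2 / ρ ^ 2 ≠ 0 := by
      have : c ^ 2 / ρ ^ 2 < 1 := (div_lt_one (by positivity)).mpr (by nlinarith)
      exact (sub_pos.mpr this).ne'
    have hsq' : ρ ^ 2 - c ^ 2 ≠ 0 := by
      have : c ^ 2 < ρ ^ 2 := by nlinarith
      exact (sub_pos.mpr this).ne'
    have h3ne : (3:ℝ) * (1 - c ^ 2 / ρ ^ 2) ≠ 0 :=
      mul_ne_zero (by norm_num) h1m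
    have e1 : (c ^ 4 / ρ ^ 4 - 3 * m * c ^ 2 / ρ ^ 3) / (3 * (1 - c ^ 2 / ρ ^ 2)) =
        - (c ^ 2 / (3 * ρ ^ 2)) * ((c ^ 2 - 3 * m * ρ) / (c ^ 2 - ρ ^ 2)) := by
      rw [div_eq_iff h3ne]
      field_simp
      ring
    rw [hA ρ, e1]
    generalize Real.log ((ρ + c) / (ρ - c)) = L
    field_simp
    ring
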